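/- Let δ > 0 and R₂ ≥ 2δ, and set A = (R₂ − δ)/R₂ and B = (2R₂ − δ)δ/R₂. Let f(z) = z + ∑_{n=2}^∞ a_n z^n be analytic on the open unit disk D and subordinate to Bz/(1 − Az); every convex function of bounded type f ∈ CV(R₁, R₂) with δ = d(0, ∂f(D)) has this form. Then M_f(r) ≤ δ for all 0 ≤ r ≤ R₂/(3R₂ − 2δ). -/

import Mathlib

open Metric

/-- The majorant series `M_F(r) = ∑ |A_n| r^n` of an analytic function
`F(z) = ∑ A_n z^n` on the unit disk, where `A_n = F⁽ⁿ⁾(0)/n!`. -/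
noncomputable def majorant (F : ℂ → ℂ) (r : ℝ) : ℝ :=
  ∑' n : ℕ, ‖iteratedDeriv n F 0 / n.factorial‖ * r ^ n

/-- `g` is subordinate to `f` on the unit disk: `g = f ∘ φ` for some analytic
self-map `φ` of the unit disk with `φ 0 = 0`. -/
def Subordinate (g f : ℂ → ℂ) : Prop :=
  ∃ φ : ℂ → ℂ, AnalyticOnNhd ℂ φ (ball 0 1) ∧ φ 0 = 0 ∧
    Set.MapsTo φ (ball 0 1) (ball 0 1) ∧ Set.EqOn g (f ∘ φ) (ball 0 1)


open Metric Finset Complex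
open scoped ENNReal NNReal Topology

noncomputable def uroot (N : ℕ) : ℂ := Complex.exp (2 * Real.pi * Complex.I / N)

lemma uroot_pow_N {N : ℕ} (hN : 0 < N) : uroot N ^ N = 1 := by
  rw [uroot, ← Complex.exp_nat_mul]
  rw [mul_div_cancel₀ _ (Nat.cast_ne_zero.mpr hN.ne' : (N:ℂ) ≠ 0)]
  exact Complex.exp_two_pi_mul_I

lemma uroot_norm (N : ℕ) (hN : 0 < N) : ‖uroot N‖ = 1 := by
  have : (2 * Real.pi * Complex.I / N) = ((2 * Real.pi / N : ℝ) : ℂ) * Complex.I := by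
    push_cast; ring
  rw [uroot, this, Complex.norm_exp_ofReal_mul_I]

lemma uroot_pow_inj {N n m : ℕ} (hn : n < N) (hm : m < N) (h : uroot N ^ n = uroot N ^ m) : n = m := by
  have hN : 0 < N := lt_of_le_of_lt (Nat.zero_le _) hn
  have hNc : (N : ℂ) ≠ 0 := Nat.cast_ne_zero.mpr hN.ne'
  have h2 : (2 * (Real.pi : ℂ) * Complex.I) ≠ 0 := by
    simp [Real.pi_ne_zero, Complex.I_ne_zero]
  rw [uroot, ← Complex.exp_nat_mul, ← Complex.exp_nat_mul,
    Complex.exp_eq_exp_iff_exists_int] at h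
  obtain ⟨k, hk⟩ := h
  have hk' : (n : ℂ) = m + k * N := by
    field_simp at hk
    linear_combination hk
  have hz : (n : ℤ) = m + k * N := by exact_mod_cast hk'
  have hNZ : (0 : ℤ) < N := by exact_mod_cast hN
  rcases lt_trichotomy k 0 with hk0 | hk0 | hk0
  · exfalso
    have : k ≤ -1 := by omega
    have : k * N ≤ -N := by nlinarith
    have : (n : ℤ) < 0 := by
      have hmN : (m : ℤ) < N := by exact_mod_cast hm
      omega
    omega
  · subst hk0; simpa using hz
  · exfalso
    have : 1 ≤ k := by omega
    have : N ≤ k * N := by nlinarith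
    have hnN : (n : ℤ) < N := by exact_mod_cast hn
    omega

lemma root_sum {N : ℕ} (hN : 0 < N) {x : ℂ} (hx : x ^ N = 1) (hx1 : x ≠ 1) :
    ∑ j ∈ Finset.range N, x ^ j = 0 := by
  rw [geom_sum_eq hx1, hx, sub_self, zero_div]

lemma uroot_mul_conj_self (N n : ℕ) (hN : 0 < N) :
    uroot N ^ n * (starRingEnd ℂ) (uroot N ^ n) = 1 := by
  rw [Complex.mul_conj]
  have : ‖uroot N ^ n‖ = 1 := by
    rw [norm_pow]
    rw [uroot_norm N hN, one_pow]
  rw [Complex.normSq_eq_norm_sq]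
  rw [this]; norm_num

lemma orth {N : ℕ} (hN : 0 < N) {n m : ℕ} (hn : n < N) (hm : m < N) :
    ∑ j ∈ Finset.range N, (uroot N ^ n) ^ j * ((starRingEnd ℂ) (uroot N ^ m)) ^ j
      = if n = m then (N : ℂ) else 0 := by
  by_cases h : n = m
  · subst h
    simp only [if_pos rfl]
    have : ∀ j, (uroot N ^ n) ^ j * ((starRingEnd ℂ) (uroot N ^ n)) ^ j = 1 := by
      intro j
      rw [← mul_pow, uroot_mul_conj_self N n hN, one_pow]
    rw [Finset.sum_congr rfl (fun j _ => this j)]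
    simp
  · rw [if_neg h]
    have key : ∀ j, (uroot N ^ n) ^ j * ((starRingEnd ℂ) (uroot N ^ m)) ^ j
        = (uroot N ^ n * (starRingEnd ℂ) (uroot N ^ m)) ^ j := fun j => (mul_pow _ _ _).symm
    simp only [key]
    apply root_sum hN
    · rw [mul_pow, ← pow_mul, mul_comm n N, pow_mul, uroot_pow_N hN, one_pow, ← map_pow,
        ← pow_mul, mul_comm m N, pow_mul, uroot_pow_N hN, one_pow, map_one, one_mul]
    · intro hcon
      apply h
      apply uroot_pow_inj hn hm
      have hc : (starRingEnd ℂ) (uroot N ^ m) ≠ 0 := by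
        intro h0
        have := uroot_mul_conj_self N m hN
        rw [h0, mul_zero] at this
        exact one_ne_zero this.symm
      have h1 : uroot N ^ n * (starRingEnd ℂ) (uroot N ^ m)
          = uroot N ^ m * (starRingEnd ℂ) (uroot N ^ m) := by
        rw [hcon, uroot_mul_conj_self N m hN]
      exact mul_right_cancel₀ hc h1
lemma sum_normSq_eq {N : ℕ} (hN : 0 < N) (c : ℕ → ℂ) :
    ∑ j ∈ Finset.range N, Complex.normSq (∑ n ∈ Finset.range N, c n * (uroot N ^ n) ^ j)
      = N * ∑ n ∈ Finset.range N, Complex.normSq (c n) := by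
  have key : ∑ j ∈ Finset.range N,
      ((∑ n ∈ Finset.range N, c n * (uroot N ^ n) ^ j) *
        (starRingEnd ℂ) (∑ n ∈ Finset.range N, c n * (uroot N ^ n) ^ j))
      = (N : ℂ) * ∑ n ∈ Finset.range N, (c n * (starRingEnd ℂ) (c n)) := by
    have expand : ∀ j ∈ Finset.range N,
        (∑ n ∈ Finset.range N, c n * (uroot N ^ n) ^ j) *
          (starRingEnd ℂ) (∑ n ∈ Finset.range N, c n * (uroot N ^ n) ^ j)
        = ∑ n ∈ Finset.range N, ∑ m ∈ Finset.range N,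
            (c n * (starRingEnd ℂ) (c m)) * ((uroot N ^ n) ^ j * ((starRingEnd ℂ) (uroot N ^ m)) ^ j) := by
      intro j _
      rw [map_sum, Finset.sum_mul_sum]
      refine Finset.sum_congr rfl fun n _ => Finset.sum_congr rfl fun m _ => ?_
      rw [map_mul, map_pow]
      ring
    rw [Finset.sum_congr rfl expand, Finset.sum_comm]
    have inner : ∀ n ∈ Finset.range N,
        ∑ j ∈ Finset.range N, ∑ m ∈ Finset.range N,
          (c n * (starRingEnd ℂ) (c m)) * ((uroot N ^ n) ^ j * ((starRingEnd ℂ) (uroot N ^ m)) ^ j)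
        = (N : ℂ) * (c n * (starRingEnd ℂ) (c n)) := by
      intro n hn
      rw [Finset.sum_comm]
      have : ∀ m ∈ Finset.range N,
          ∑ j ∈ Finset.range N,
            (c n * (starRingEnd ℂ) (c m)) * ((uroot N ^ n) ^ j * ((starRingEnd ℂ) (uroot N ^ m)) ^ j)
          = (c n * (starRingEnd ℂ) (c m)) * (if n = m then (N:ℂ) else 0) := by
        intro m hm
        rw [← Finset.mul_sum, orth hN (Finset.mem_range.mp hn) (Finset.mem_range.mp hm)]
      rw [Finset.sum_congr rfl this]
      simp only [mul_ite, mul_zero]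
      rw [Finset.sum_ite_eq (Finset.range N) n (fun m => c n * (starRingEnd ℂ) (c m) * (N:ℂ)),
        if_pos hn]
      ring
    rw [Finset.sum_congr rfl inner, ← Finset.mul_sum]
  have cast1 : ∀ z : ℂ, z * (starRingEnd ℂ) z = (Complex.normSq z : ℂ) := Complex.mul_conj
  simp only [cast1] at key
  have : ((∑ j ∈ Finset.range N, Complex.normSq (∑ n ∈ Finset.range N, c n * (uroot N ^ n) ^ j) : ℝ) : ℂ)
      = ((N * ∑ n ∈ Finset.range N, Complex.normSq (c n) : ℝ) : ℂ) := by
    push_cast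
    rw [key]
  exact_mod_cast this

lemma sum_mean_eq {N : ℕ} (hN : 0 < N) (d : ℕ → ℂ) :
    ∑ j ∈ Finset.range N, ∑ n ∈ Finset.range N, d n * (uroot N ^ n) ^ j = N * d 0 := by
  rw [Finset.sum_comm]
  have : ∀ n ∈ Finset.range N, ∑ j ∈ Finset.range N, d n * (uroot N ^ n) ^ j
      = if n = 0 then (N : ℂ) * d 0 else 0 := by
    intro n hn
    by_cases h : n = 0
    · subst h; simp
    · rw [if_neg h, ← Finset.mul_sum, root_sum hN, mul_zero]
      · rw [← pow_mul, mul_comm n N, pow_mul, uroot_pow_N hN, one_pow]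
      · intro hcon
        exact h (uroot_pow_inj (Finset.mem_range.mp hn) hN (by rw [hcon, pow_zero]))
  rw [Finset.sum_congr rfl this, Finset.sum_ite_eq' (Finset.range N) 0 (fun _ => (N:ℂ) * d 0)]
  rw [if_pos (Finset.mem_range.mpr hN)]
lemma norm_mul_pow_unit (a u : ℂ) (hu : ‖u‖ = 1) (n : ℕ) : ‖a * u ^ n‖ = ‖a‖ := by
  rw [norm_mul, norm_pow, hu, one_pow, mul_one]

open Filter Topology in
lemma besselBound {f G : ℂ → ℂ} {p q : FormalMultilinearSeries ℂ ℂ ℂ} {R : NNReal}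
    (hf : HasFPowerSeriesOnBall f p 0 R) (hG : HasFPowerSeriesOnBall G q 0 R)
    {ρ : ℝ} (hρ0 : 0 < ρ) (hρR : ρ < R)
    (hpt : ∀ z : ℂ, ‖z‖ = ρ → ‖f z‖ ^ 2 ≤ (G z).re) (K : ℕ) :
    ∑ n ∈ Finset.range K, ‖p.coeff n‖ ^ 2 * ρ ^ (2 * n) ≤ (G 0).re := by
  set c : ℕ → ℂ := fun n => p.coeff n * (ρ : ℂ) ^ n with hc
  set d : ℕ → ℂ := fun n => q.coeff n * (ρ : ℂ) ^ n with hd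
  have hρcoe : ((ρ.toNNReal : ℝ≥0∞)) < (R : ℝ≥0∞) := by
    rw [ENNReal.coe_lt_coe]
    exact (Real.toNNReal_lt_iff_lt_coe hρ0.le).mpr hρR
  have hcnorm : ∀ n, ‖c n‖ = ‖p.coeff n‖ * ρ ^ n := by
    intro n
    rw [hc, norm_mul, norm_pow, Complex.norm_real, Real.norm_eq_abs, abs_of_pos hρ0]
  have hdnorm : ∀ n, ‖d n‖ = ‖q.coeff n‖ * ρ ^ n := by
    intro n
    rw [hd, norm_mul, norm_pow, Complex.norm_real, Real.norm_eq_abs, abs_of_pos hρ0]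
  have hsc : Summable fun n => ‖c n‖ := by
    have := p.summable_norm_mul_pow (lt_of_lt_of_le hρcoe hf.r_le)
    refine this.congr fun n => ?_
    rw [hcnorm, FormalMultilinearSeries.norm_apply_eq_norm_coef,
      Real.coe_toNNReal ρ hρ0.le]
  have hsd : Summable fun n => ‖d n‖ := by
    have := q.summable_norm_mul_pow (lt_of_lt_of_le hρcoe hG.r_le)
    refine this.congr fun n => ?_
    rw [hdnorm, FormalMultilinearSeries.norm_apply_eq_norm_coef,
      Real.coe_toNNReal ρ hρ0.le]
  have hmem : ∀ u : ℂ, ‖u‖ = 1 → ((ρ : ℂ) * u) ∈ Metric.eball (0 : ℂ) (R : ℝ≥0∞) := by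
    intro u hu
    rw [mem_emetric_ball_zero_iff]
    have : ‖(ρ : ℂ) * u‖ < (R : ℝ) := by
      rw [norm_mul, hu, mul_one, Complex.norm_real, Real.norm_eq_abs, abs_of_pos hρ0]
      exact hρR
    exact_mod_cast this
  have hfsum : ∀ u : ℂ, ‖u‖ = 1 → HasSum (fun n => c n * u ^ n) (f ((ρ : ℂ) * u)) := by
    intro u hu
    have h := hf.hasSum (hmem u hu)
    simp only [FormalMultilinearSeries.apply_eq_pow_smul_coeff, zero_add, smul_eq_mul] at h
    have he : (fun n => c n * u ^ n) = fun n => ((ρ : ℂ) * u) ^ n * p.coeff n := by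
      funext n; rw [hc, mul_pow]; ring
    rw [he]; exact h
  have hGsum : ∀ u : ℂ, ‖u‖ = 1 → HasSum (fun n => d n * u ^ n) (G ((ρ : ℂ) * u)) := by
    intro u hu
    have h := hG.hasSum (hmem u hu)
    simp only [FormalMultilinearSeries.apply_eq_pow_smul_coeff, zero_add, smul_eq_mul] at h
    have he : (fun n => d n * u ^ n) = fun n => ((ρ : ℂ) * u) ^ n * q.coeff n := by
      funext n; rw [hd, mul_pow]; ring
    rw [he]; exact h
  set tf : ℝ := ∑' n, ‖c n‖ with htf
  set tG : ℝ := ∑' n, ‖d n‖ with htG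
  set CB : ℝ := Real.sqrt tG with hCB
  have htG0 : 0 ≤ tG := tsum_nonneg fun n => norm_nonneg _
  -- G is bounded by tG on the circle
  have hGle : ∀ u : ℂ, ‖u‖ = 1 → ‖G ((ρ : ℂ) * u)‖ ≤ tG := by
    intro u hu
    rw [← (hGsum u hu).tsum_eq]
    calc ‖∑' n, d n * u ^ n‖ ≤ ∑' n, ‖d n * u ^ n‖ :=
          norm_tsum_le_tsum_norm (hsd.congr fun n => (norm_mul_pow_unit (d n) u hu n).symm)
      _ = tG := tsum_congr fun n => norm_mul_pow_unit (d n) u hu n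
  have hFle : ∀ u : ℂ, ‖u‖ = 1 → ‖f ((ρ : ℂ) * u)‖ ≤ CB := by
    intro u hu
    have h1 : ‖f ((ρ : ℂ) * u)‖ ^ 2 ≤ tG := by
      refine le_trans (hpt _ ?_) (le_trans (Complex.re_le_norm _) ?_)
      · rw [norm_mul, hu, mul_one, Complex.norm_real, Real.norm_eq_abs, abs_of_pos hρ0]
      · exact hGle u hu
    rw [hCB]
    exact (Real.le_sqrt (norm_nonneg _) htG0).mpr h1
  -- partial sums and tails
  set sf : ℕ → ℝ := fun N => ∑ n ∈ Finset.range N, ‖c n‖ with hsf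
  set sG : ℕ → ℝ := fun N => ∑ n ∈ Finset.range N, ‖d n‖ with hsG
  have hsfle : ∀ N, sf N ≤ tf := fun N =>
    Summable.sum_le_tsum (Finset.range N) (fun i _ => norm_nonneg _) hsc
  have hsGle : ∀ N, sG N ≤ tG := fun N =>
    Summable.sum_le_tsum (Finset.range N) (fun i _ => norm_nonneg _) hsd
  -- tail bounds
  have htail : ∀ (g : ℕ → ℂ) (S : ℂ) (N : ℕ), Summable (fun n => ‖g n‖) →
      HasSum g S → ‖S - ∑ n ∈ Finset.range N, g n‖ ≤ ∑' n, ‖g n‖ - ∑ n ∈ Finset.range N, ‖g n‖ := by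
    intro g S N hsg hg
    have h1 := Summable.sum_add_tsum_compl (s := Finset.range N) hg.summable
    rw [hg.tsum_eq] at h1
    have h2 := Summable.sum_add_tsum_compl (s := Finset.range N) hsg
    have : S - ∑ n ∈ Finset.range N, g n = ∑' (x : ↑(↑(Finset.range N) : Set ℕ)ᶜ), g ↑x := by
      rw [← h1]; ring
    rw [this]
    calc ‖∑' (x : ↑(↑(Finset.range N) : Set ℕ)ᶜ), g ↑x‖
        ≤ ∑' (x : ↑(↑(Finset.range N) : Set ℕ)ᶜ), ‖g ↑x‖ :=
          norm_tsum_le_tsum_norm (hsg.subtype _)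
      _ = ∑' n, ‖g n‖ - ∑ n ∈ Finset.range N, ‖g n‖ := by rw [← h2]; ring
  -- main per-N estimate
  have main : ∀ N : ℕ, K < N →
      ∑ n ∈ Finset.range K, ‖p.coeff n‖ ^ 2 * ρ ^ (2 * n)
        ≤ (G 0).re + (tG - sG N) + (2 * CB * (tf - sf N) + (tf - sf N) ^ 2) := by
    intro N hKN
    have hN : 0 < N := lt_of_le_of_lt (Nat.zero_le _) hKN
    have hNR : (0 : ℝ) < N := by exact_mod_cast hN
    set ζ : ℂ := uroot N with hζ
    have hζnorm : ∀ j : ℕ, ‖ζ ^ j‖ = 1 := by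
      intro j; rw [norm_pow, uroot_norm N hN, one_pow]
    set T : ℕ → ℂ := fun j => ∑ n ∈ Finset.range N, c n * (ζ ^ n) ^ j with hT
    set F : ℕ → ℂ := fun j => f ((ρ : ℂ) * ζ ^ j) with hF
    have hTalt : ∀ j, T j = ∑ n ∈ Finset.range N, c n * (ζ ^ j) ^ n := by
      intro j
      exact Finset.sum_congr rfl fun n _ => by rw [pow_right_comm]
    have εf_nonneg : 0 ≤ tf - sf N := by linarith [hsfle N]
    have εG_nonneg : 0 ≤ tG - sG N := by linarith [hsGle N]
    have htailf : ∀ j, ‖F j - T j‖ ≤ tf - sf N := by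
      intro j
      rw [hTalt j]
      exact htail (fun n => c n * (ζ ^ j) ^ n) (F j) N
        (hsc.congr fun n => (norm_mul_pow_unit (c n) _ (hζnorm j) n).symm)
        (hfsum (ζ ^ j) (hζnorm j)) |>.trans (le_of_eq (by
          congr 1
          · exact tsum_congr fun n => norm_mul_pow_unit (c n) _ (hζnorm j) n
          · exact Finset.sum_congr rfl fun n _ => norm_mul_pow_unit (c n) _ (hζnorm j) n))
    -- step A
    have stepA : (N : ℝ) * ∑ n ∈ Finset.range K, ‖p.coeff n‖ ^ 2 * ρ ^ (2 * n)
        ≤ ∑ j ∈ Finset.range N, Complex.normSq (T j) := by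
      have h1 := sum_normSq_eq hN c
      rw [hT]
      rw [h1]
      have h2 : ∑ n ∈ Finset.range K, ‖p.coeff n‖ ^ 2 * ρ ^ (2 * n)
          ≤ ∑ n ∈ Finset.range N, Complex.normSq (c n) := by
        have hterm : ∀ n, Complex.normSq (c n) = ‖p.coeff n‖ ^ 2 * ρ ^ (2 * n) := by
          intro n
          rw [Complex.normSq_eq_norm_sq, hcnorm n, mul_pow, ← pow_mul,
            mul_comm n 2]
        rw [Finset.sum_congr rfl (fun n _ => (hterm n).symm)]
        refine Finset.sum_le_sum_of_subset_of_nonneg ?_ (fun i _ _ => Complex.normSq_nonneg _)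
        exact Finset.range_subset_range.mpr hKN.le
      exact mul_le_mul_of_nonneg_left h2 hNR.le
    -- step B
    have stepB : ∀ j ∈ Finset.range N, Complex.normSq (T j)
        ≤ (G ((ρ : ℂ) * ζ ^ j)).re + (2 * CB * (tf - sf N) + (tf - sf N) ^ 2) := by
      intro j _
      have h1 : ‖T j‖ ≤ ‖F j‖ + (tf - sf N) := by
        calc ‖T j‖ = ‖F j - (F j - T j)‖ := by congr 1; ring
          _ ≤ ‖F j‖ + ‖F j - T j‖ := norm_sub_le _ _
          _ ≤ ‖F j‖ + (tf - sf N) := by linarith [htailf j]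
      have h2 : ‖F j‖ ≤ CB := hFle (ζ ^ j) (hζnorm j)
      have h3 : ‖F j‖ ^ 2 ≤ (G ((ρ : ℂ) * ζ ^ j)).re := by
        refine hpt _ ?_
        rw [norm_mul, hζnorm j, mul_one, Complex.norm_real, Real.norm_eq_abs, abs_of_pos hρ0]
      have h4 : Complex.normSq (T j) = ‖T j‖ ^ 2 := by
        rw [Complex.normSq_eq_norm_sq]
      rw [h4]
      have h5 : ‖T j‖ ^ 2 ≤ (‖F j‖ + (tf - sf N)) ^ 2 :=
        pow_le_pow_left₀ (norm_nonneg _) h1 2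
      nlinarith [norm_nonneg (F j), norm_nonneg (T j)]
    -- step C
    have stepC : ∑ j ∈ Finset.range N, (G ((ρ : ℂ) * ζ ^ j)).re
        ≤ (N : ℝ) * (G 0).re + (N : ℝ) * (tG - sG N) := by
      set W : ℂ := ∑ j ∈ Finset.range N, G ((ρ : ℂ) * ζ ^ j) with hW
      have hd0 : d 0 = G 0 := by
        rw [hd]
        simp only [pow_zero, mul_one]
        have := hG.coeff_zero (fun _ => 1)
        rw [FormalMultilinearSeries.coeff] at *
        simpa using this
      have hWdiff : ‖W - (N : ℂ) * d 0‖ ≤ (N : ℝ) * (tG - sG N) := by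
        have h6 : W - (N : ℂ) * d 0
            = ∑ j ∈ Finset.range N, (G ((ρ : ℂ) * ζ ^ j) - ∑ n ∈ Finset.range N, d n * (ζ ^ n) ^ j) := by
          rw [hW, Finset.sum_sub_distrib, sum_mean_eq hN d]
        rw [h6]
        calc ‖∑ j ∈ Finset.range N, (G ((ρ : ℂ) * ζ ^ j) - ∑ n ∈ Finset.range N, d n * (ζ ^ n) ^ j)‖
            ≤ ∑ j ∈ Finset.range N, ‖G ((ρ : ℂ) * ζ ^ j) - ∑ n ∈ Finset.range N, d n * (ζ ^ n) ^ j‖ :=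
              norm_sum_le _ _
          _ ≤ ∑ j ∈ Finset.range N, (tG - sG N) := by
              refine Finset.sum_le_sum fun j _ => ?_
              have := htail (fun n => d n * (ζ ^ j) ^ n) (G ((ρ : ℂ) * ζ ^ j)) N
                (hsd.congr fun n => (norm_mul_pow_unit (d n) _ (hζnorm j) n).symm)
                (hGsum (ζ ^ j) (hζnorm j))
              have heq1 : (∑ n ∈ Finset.range N, d n * (ζ ^ n) ^ j)
                  = ∑ n ∈ Finset.range N, d n * (ζ ^ j) ^ n :=
                Finset.sum_congr rfl fun n _ => by rw [pow_right_comm]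
              rw [heq1]
              refine this.trans (le_of_eq ?_)
              congr 1
              · exact tsum_congr fun n => norm_mul_pow_unit (d n) _ (hζnorm j) n
              · exact Finset.sum_congr rfl fun n _ => norm_mul_pow_unit (d n) _ (hζnorm j) n
          _ = (N : ℝ) * (tG - sG N) := by rw [Finset.sum_const, Finset.card_range, nsmul_eq_mul]
      have hre : ∑ j ∈ Finset.range N, (G ((ρ : ℂ) * ζ ^ j)).re = W.re := by
        rw [hW, Complex.re_sum]
      rw [hre]
      have h7 : W.re - ((N : ℂ) * d 0).re ≤ ‖W - (N : ℂ) * d 0‖ := by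
        rw [← Complex.sub_re]
        exact Complex.re_le_norm _
      have h8 : ((N : ℂ) * d 0).re = (N : ℝ) * (G 0).re := by
        rw [hd0]
        simp [Complex.mul_re]
      linarith [hWdiff]
    -- combine
    have total : (N : ℝ) * ∑ n ∈ Finset.range K, ‖p.coeff n‖ ^ 2 * ρ ^ (2 * n)
        ≤ (N : ℝ) * ((G 0).re + (tG - sG N) + (2 * CB * (tf - sf N) + (tf - sf N) ^ 2)) := by
      calc (N : ℝ) * ∑ n ∈ Finset.range K, ‖p.coeff n‖ ^ 2 * ρ ^ (2 * n)
          ≤ ∑ j ∈ Finset.range N, Complex.normSq (T j) := stepA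
        _ ≤ ∑ j ∈ Finset.range N, ((G ((ρ : ℂ) * ζ ^ j)).re + (2 * CB * (tf - sf N) + (tf - sf N) ^ 2)) :=
            Finset.sum_le_sum stepB
        _ = (∑ j ∈ Finset.range N, (G ((ρ : ℂ) * ζ ^ j)).re)
              + (N : ℝ) * (2 * CB * (tf - sf N) + (tf - sf N) ^ 2) := by
            rw [Finset.sum_add_distrib, Finset.sum_const, Finset.card_range, nsmul_eq_mul]
        _ ≤ (N : ℝ) * (G 0).re + (N : ℝ) * (tG - sG N)
              + (N : ℝ) * (2 * CB * (tf - sf N) + (tf - sf N) ^ 2) := by linarith [stepC]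
        _ = (N : ℝ) * ((G 0).re + (tG - sG N) + (2 * CB * (tf - sf N) + (tf - sf N) ^ 2)) := by ring
    exact le_of_mul_le_mul_left total hNR
  -- take the limit N → ∞
  have hsftend : Tendsto (fun N => tf - sf N) atTop (𝓝 0) := by
    have h := (tendsto_const_nhds (x := tf) (f := atTop (α := ℕ))).sub hsc.hasSum.tendsto_sum_nat
    rw [← htf, sub_self] at h
    exact h
  have hsGtend : Tendsto (fun N => tG - sG N) atTop (𝓝 0) := by
    have h := (tendsto_const_nhds (x := tG) (f := atTop (α := ℕ))).sub hsd.hasSum.tendsto_sum_nat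
    rw [← htG, sub_self] at h
    exact h
  have hb : Tendsto (fun N => (G 0).re + (tG - sG N) + (2 * CB * (tf - sf N) + (tf - sf N) ^ 2))
      atTop (𝓝 ((G 0).re)) := by
    have h1 : Tendsto (fun N => 2 * CB * (tf - sf N)) atTop (𝓝 0) := by
      simpa using hsftend.const_mul (2 * CB)
    have h2 : Tendsto (fun N => (tf - sf N) ^ 2) atTop (𝓝 0) := by
      simpa using hsftend.pow 2
    have := ((tendsto_const_nhds (x := (G 0).re) (f := atTop (α := ℕ))).add hsGtend).add (h1.add h2)
    simpa using this
  exact ge_of_tendsto hb (eventually_atTop.mpr ⟨K + 1, fun N hN => main N (by omega)⟩)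
lemma key_ineq {A B ρ : ℝ} (hA0 : 0 ≤ A) (hA1 : A < 1) (hB : 0 ≤ B) (hρ0 : 0 < ρ)
    (hρ1 : ρ < 1) {w : ℂ} (hw : ‖w‖ ≤ ρ) :
    ‖(B : ℂ) * w / (1 - (A : ℂ) * w)‖ ^ 2
      ≤ (((B ^ 2 * ρ ^ 2 / (1 - A ^ 2 * ρ ^ 2) : ℝ) : ℂ) * (1 + (A : ℂ) * w)
          / (1 - (A : ℂ) * w)).re := by
  set C : ℝ := B ^ 2 * ρ ^ 2 / (1 - A ^ 2 * ρ ^ 2) with hC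
  have hAρ : A * ρ < 1 := by nlinarith
  have hA2ρ : A ^ 2 * ρ ^ 2 < 1 := by nlinarith [mul_nonneg hA0 hρ0.le]
  have h1pos : 0 < 1 - A ^ 2 * ρ ^ 2 := by linarith
  have hCnn : 0 ≤ C := div_nonneg (by positivity) h1pos.le
  have hwn : 0 ≤ ‖w‖ := norm_nonneg w
  have hnsq_w : Complex.normSq w ≤ ρ ^ 2 := by
    rw [← Complex.sq_norm]
    nlinarith
  have hu : (1 : ℂ) - (A : ℂ) * w ≠ 0 := by
    intro h
    have h1 : (A : ℂ) * w = 1 := by linear_combination -h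
    have h2 : ‖(A : ℂ) * w‖ = 1 := by rw [h1, norm_one]
    rw [norm_mul, Complex.norm_real, Real.norm_eq_abs, _root_.abs_of_nonneg hA0] at h2
    nlinarith
  have hnsq_u : 0 < Complex.normSq (1 - (A : ℂ) * w) := by
    rwa [Complex.normSq_pos]
  have hL : ‖(B : ℂ) * w / (1 - (A : ℂ) * w)‖ ^ 2
      = B ^ 2 * Complex.normSq w / Complex.normSq (1 - (A : ℂ) * w) := by
    rw [Complex.sq_norm, Complex.normSq_div, Complex.normSq_mul,
      Complex.normSq_ofReal]
    ring
  have hR : (((C : ℝ) : ℂ) * (1 + (A : ℂ) * w) / (1 - (A : ℂ) * w)).re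
      = C * (1 - A ^ 2 * Complex.normSq w) / Complex.normSq (1 - (A : ℂ) * w) := by
    rw [Complex.div_re]
    simp only [Complex.mul_re, Complex.mul_im, Complex.ofReal_re, Complex.ofReal_im,
      Complex.add_re, Complex.add_im, Complex.one_re, Complex.one_im, Complex.sub_re,
      Complex.sub_im, Complex.normSq_apply]
    field_simp
    ring
  rw [hL, hR]
  rw [div_le_div_iff_of_pos_right hnsq_u]
  have hCe : C * (1 - A ^ 2 * ρ ^ 2) = B ^ 2 * ρ ^ 2 := by
    rw [hC]; exact div_mul_cancel₀ _ h1pos.ne'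
  have key : (1 - A ^ 2 * ρ ^ 2) * (C * (1 - A ^ 2 * Complex.normSq w) - B ^ 2 * Complex.normSq w)
      = B ^ 2 * (ρ ^ 2 - Complex.normSq w) := by
    linear_combination (1 - A ^ 2 * Complex.normSq w) * hCe
  nlinarith [key, h1pos, mul_nonneg (sq_nonneg B) (sub_nonneg.mpr hnsq_w)]
lemma cauchy_coeff_eq {f : ℂ → ℂ} {σ : NNReal} (hσ : 0 < σ)
    (hd : DifferentiableOn ℂ f (Metric.closedBall 0 (σ : ℝ))) (n : ℕ) :
    (cauchyPowerSeries f 0 (σ : ℝ)).coeff n = iteratedDeriv n f 0 / n.factorial := by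
  have hps := hd.hasFPowerSeriesOnBall hσ
  have h := hps.factorial_smul (1 : ℂ) n
  rw [FormalMultilinearSeries.apply_eq_pow_smul_coeff, one_pow, one_smul,
    ← iteratedDeriv_eq_iteratedFDeriv] at h
  have hne : ((n.factorial : ℂ)) ≠ 0 := Nat.cast_ne_zero.mpr n.factorial_ne_zero
  rw [eq_div_iff hne, ← h, nsmul_eq_mul]
  ring
lemma coeff_sq_bound {f φ : ℂ → ℂ} (hf : AnalyticOnNhd ℂ f (ball 0 1))
    (hφa : AnalyticOnNhd ℂ φ (ball 0 1)) (hφ0 : φ 0 = 0)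
    (hφm : Set.MapsTo φ (ball 0 1) (ball 0 1))
    {A B : ℝ} (hA0 : 0 ≤ A) (hA1 : A < 1) (hB : 0 ≤ B)
    (hfeq : Set.EqOn f ((fun z : ℂ => (B : ℂ) * z / (1 - (A : ℂ) * z)) ∘ φ) (ball 0 1))
    {ρ : ℝ} (hρ0 : 0 < ρ) (hρ1 : ρ < 1) {σ : NNReal} (hσ0 : 0 < σ) (hσ1 : (σ : ℝ) < 1)
    (hρσ : ρ < (σ : ℝ)) (K : ℕ) :
    ∑ n ∈ Finset.range K, ‖(cauchyPowerSeries f 0 (σ : ℝ)).coeff n‖ ^ 2 * ρ ^ (2 * n)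
      ≤ B ^ 2 * ρ ^ 2 / (1 - A ^ 2 * ρ ^ 2) := by
  set C : ℝ := B ^ 2 * ρ ^ 2 / (1 - A ^ 2 * ρ ^ 2) with hC
  set G : ℂ → ℂ := fun z => ((C : ℝ) : ℂ) * (1 + (A : ℂ) * φ z) / (1 - (A : ℂ) * φ z) with hG
  have hball : closedBall (0:ℂ) (σ:ℝ) ⊆ ball (0:ℂ) 1 := closedBall_subset_ball hσ1
  have hdf : DifferentiableOn ℂ f (closedBall 0 (σ:ℝ)) := hf.differentiableOn.mono hball
  have hpsf := hdf.hasFPowerSeriesOnBall hσ0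
  have hφne : ∀ z ∈ ball (0:ℂ) 1, (1:ℂ) - (A:ℂ) * φ z ≠ 0 := by
    intro z hz hcon
    have hφz : ‖φ z‖ < 1 := mem_ball_zero_iff.mp (hφm hz)
    have he : (A:ℂ) * φ z = 1 := by linear_combination -hcon
    have h2 : ‖(A:ℂ) * φ z‖ = 1 := by rw [he, norm_one]
    rw [norm_mul, Complex.norm_real, Real.norm_eq_abs, _root_.abs_of_nonneg hA0] at h2
    nlinarith
  have hdG : DifferentiableOn ℂ G (closedBall 0 (σ:ℝ)) := by
    have hdφ : DifferentiableOn ℂ φ (ball (0:ℂ) 1) := hφa.differentiableOn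
    have hball1 : DifferentiableOn ℂ G (ball (0:ℂ) 1) := by
      apply DifferentiableOn.div
      · exact (differentiableOn_const _).mul
          ((differentiableOn_const _).add ((differentiableOn_const _).mul hdφ))
      · exact (differentiableOn_const _).sub ((differentiableOn_const _).mul hdφ)
      · exact hφne
    exact hball1.mono hball
  have hpsG := hdG.hasFPowerSeriesOnBall hσ0
  have hG0re : (G 0).re = C := by
    rw [hG]; simp [hφ0]
  have hpt : ∀ z : ℂ, ‖z‖ = ρ → ‖f z‖ ^ 2 ≤ (G z).re := by
    intro z hz
    have hzb : z ∈ ball (0:ℂ) 1 := by rw [mem_ball_zero_iff, hz]; exact hρ1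
    have hfz : f z = (B:ℂ) * φ z / (1 - (A:ℂ) * φ z) := by
      have := hfeq hzb
      simpa using this
    have hφz : ‖φ z‖ ≤ ρ := by
      have h3 := Complex.norm_le_norm_of_mapsTo_ball (R := 1) hφa.differentiableOn
        (hφm.mono_right ball_subset_closedBall) hφ0 (z := z) (by rw [hz]; exact hρ1)
      rw [hz] at h3
      exact h3
    rw [hfz]
    exact key_ineq hA0 hA1 hB hρ0 hρ1 hφz
  have := besselBound hpsf hpsG hρ0 hρσ hpt K
  rwa [hG0re] at this
lemma partial_sum_bound {co : ℕ → ℝ} (hnn : ∀ n, 0 ≤ co n) (hco0 : co 0 = 0)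
    {A B δ s ρ : ℝ} (hApos : 0 < A) (hBpos : 0 ≤ B) (hδ : 0 < δ)
    (hs0 : 0 < s) (hq1 : A * s < 1) (hρpos : 0 < ρ) (hρsq : ρ ^ 2 = s / A)
    (hsδ : s * (B + A * δ) ≤ δ)
    (hbess : ∀ K : ℕ, ∑ n ∈ Finset.range K, (co n) ^ 2 * ρ ^ (2 * n)
      ≤ B ^ 2 * ρ ^ 2 / (1 - A ^ 2 * ρ ^ 2))
    (K : ℕ) : ∑ n ∈ Finset.range K, co n * s ^ n ≤ δ := by
  have h1As : 0 < 1 - A * s := by linarith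
  set C : ℝ := B ^ 2 * ρ ^ 2 / (1 - A ^ 2 * ρ ^ 2) with hC
  set q : ℝ := A * s with hq
  have hq0 : 0 ≤ q := by positivity
  have hq1' : q < 1 := hq1
  have h1q : 0 < 1 - q := by linarith
  have hqρ : (s / ρ) ^ 2 = q := by
    rw [div_pow, hρsq, hq]
    field_simp
  cases K with
  | zero => simpa using hδ.le
  | succ K' =>
    rw [Finset.sum_range_succ']
    have h00 : co 0 * s ^ 0 = 0 := by rw [hco0, zero_mul]
    have hCS := Finset.sum_mul_sq_le_sq_mul_sq (Finset.range K')
      (fun i => co (i+1) * ρ ^ (i+1)) (fun i => (s/ρ) ^ (i+1))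
    have hρs : ρ * (s / ρ) = s := by field_simp
    have hprod : ∀ i, (co (i+1) * ρ ^ (i+1)) * (s/ρ) ^ (i+1) = co (i+1) * s ^ (i+1) := by
      intro i
      rw [mul_assoc, ← mul_pow, hρs]
    have hbound1 : ∑ i ∈ Finset.range K', (co (i+1) * ρ ^ (i+1)) ^ 2 ≤ C := by
      have hb := hbess (K' + 1)
      rw [Finset.sum_range_succ'] at hb
      have he : ∀ i, (co (i+1) * ρ ^ (i+1)) ^ 2 = co (i+1) ^ 2 * ρ ^ (2 * (i+1)) := by
        intro i
        rw [mul_pow, ← pow_mul, mul_comm (i+1) 2]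
      rw [Finset.sum_congr rfl fun i _ => he i]
      have hterm0 : 0 ≤ co 0 ^ 2 * ρ ^ (2 * 0) := by positivity
      linarith
    have hbound2 : ∑ i ∈ Finset.range K', ((s/ρ) ^ (i+1)) ^ 2 ≤ q / (1 - q) := by
      have he : ∀ i, ((s/ρ) ^ (i+1)) ^ 2 = q ^ (i+1) := by
        intro i
        rw [← pow_mul, mul_comm (i+1) 2, pow_mul, hqρ]
      rw [Finset.sum_congr rfl fun i _ => he i]
      have hgeom : ∑ i ∈ Finset.range K', q ^ i ≤ 1 / (1 - q) := by
        rw [geom_sum_eq hq1'.ne, ← neg_div_neg_eq, neg_sub, neg_sub]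
        have hqK : 0 ≤ q ^ K' := by positivity
        apply div_le_div_of_nonneg_right ?_ h1q.le
        linarith
      have hsum : ∑ i ∈ Finset.range K', q ^ (i+1) = (∑ i ∈ Finset.range K', q ^ i) * q := by
        rw [Finset.sum_mul]
        exact Finset.sum_congr rfl fun i _ => (pow_succ q i).symm
      rw [hsum]
      calc (∑ i ∈ Finset.range K', q ^ i) * q ≤ (1 / (1 - q)) * q :=
            mul_le_mul_of_nonneg_right hgeom hq0
        _ = q / (1 - q) := one_div_mul_eq_div _ _
    have hsum_nonneg1 : (0:ℝ) ≤ ∑ i ∈ Finset.range K', (co (i+1) * ρ ^ (i+1)) ^ 2 := by positivity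
    have hsum_nonneg2 : (0:ℝ) ≤ ∑ i ∈ Finset.range K', ((s/ρ) ^ (i+1)) ^ 2 := by positivity
    set T : ℝ := ∑ i ∈ Finset.range K', co (i+1) * s ^ (i+1) with hT
    have hT2 : T ^ 2 ≤ C * (q / (1 - q)) := by
      have h4 : T ^ 2 ≤ (∑ i ∈ Finset.range K', (co (i+1) * ρ ^ (i+1)) ^ 2) *
          (∑ i ∈ Finset.range K', ((s/ρ) ^ (i+1)) ^ 2) := by
        rw [hT, ← Finset.sum_congr rfl fun i _ => hprod i]
        exact hCS
      calc T ^ 2 ≤ _ := h4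
        _ ≤ C * (q / (1 - q)) := by
          apply mul_le_mul hbound1 hbound2 hsum_nonneg2
          linarith
    have hCq : C * (q / (1 - q)) = (B * s / (1 - A * s)) ^ 2 := by
      have hA2sA : A ^ 2 * (s / A) = A * s := by field_simp
      rw [hC, hρsq, hq, hA2sA]
      field_simp
    have hTnn : 0 ≤ T := by
      rw [hT]
      apply Finset.sum_nonneg
      intro i _
      have := hnn (i+1)
      positivity
    have hXnn : 0 ≤ B * s / (1 - A * s) := by positivity
    have hTle : T ≤ B * s / (1 - A * s) := by
      rw [← Real.sqrt_sq hTnn, ← Real.sqrt_sq hXnn]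
      apply Real.sqrt_le_sqrt
      rw [← hCq] at *
      linarith
    have hfinal : B * s / (1 - A * s) ≤ δ := by
      rw [div_le_iff₀ h1As]
      nlinarith
    rw [h00, add_zero]
    exact le_trans hTle hfinal

theorem bohr_convex_bounded_type (δ R₂ : ℝ) (hδ : 0 < δ) (hR : 2 * δ ≤ R₂)
    (f : ℂ → ℂ)
    (hf : AnalyticOnNhd ℂ f (ball 0 1))
    (h0 : f 0 = 0) (h1 : deriv f 0 = 1)
    (hsub : Subordinate f (fun z : ℂ =>
      (((2 * R₂ - δ) * δ / R₂ : ℝ) : ℂ) * z /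
        (1 - (((R₂ - δ) / R₂ : ℝ) : ℂ) * z))) :
    ∀ r : ℝ, 0 ≤ r → r ≤ R₂ / (3 * R₂ - 2 * δ) →
      majorant f r ≤ δ := by
  intro r hr0 hrle
  set A : ℝ := (R₂ - δ) / R₂ with hA
  set B : ℝ := (2 * R₂ - δ) * δ / R₂ with hB
  obtain ⟨φ, hφa, hφ0, hφm, hfeq⟩ := hsub
  have hR2 : 0 < R₂ := by linarith
  have h3R : 0 < 3 * R₂ - 2 * δ := by linarith
  have hAhalf : 1 / 2 ≤ A := by rw [hA, le_div_iff₀ hR2]; linarith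
  have hA0 : 0 ≤ A := by linarith
  have hA1 : A < 1 := by rw [hA, div_lt_one hR2]; linarith
  have hApos : 0 < A := by linarith
  have hBpos : 0 < B := by rw [hB]; apply div_pos; nlinarith; exact hR2
  have hr₀pos : 0 < R₂ / (3 * R₂ - 2 * δ) := div_pos hR2 h3R
  have hr₀half : R₂ / (3 * R₂ - 2 * δ) ≤ 1 / 2 := by
    rw [div_le_div_iff₀ h3R (by norm_num : (0:ℝ) < 2)]; linarith
  have hr₀A : R₂ / (3 * R₂ - 2 * δ) ≤ A := by
    rw [hA, div_le_div_iff₀ h3R hR2]; nlinarith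
  have hBAδ : B + A * δ = δ * (3 * R₂ - 2 * δ) / R₂ := by
    rw [hA, hB]; field_simp; ring
  have hstrict : ∀ s : ℝ, 0 < s → s < R₂ / (3 * R₂ - 2 * δ) → ∀ K : ℕ,
      ∑ n ∈ Finset.range K, ‖iteratedDeriv n f 0 / n.factorial‖ * s ^ n ≤ δ := by
    intro s hs0 hsr K
    have hs1 : s < 1 := lt_of_lt_of_le hsr (le_trans hr₀half (by norm_num))
    have hsA : s < A := lt_of_lt_of_le hsr hr₀A
    have hsA1 : A * s < 1 := by nlinarith
    set ρ : ℝ := Real.sqrt (s / A) with hρ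
    have hρpos : 0 < ρ := Real.sqrt_pos.mpr (by positivity)
    have hρsq : ρ ^ 2 = s / A := Real.sq_sqrt (by positivity)
    have hρ1 : ρ < 1 := by
      rw [hρ, show (1:ℝ) = Real.sqrt 1 by simp]
      exact Real.sqrt_lt_sqrt (by positivity) ((div_lt_one hApos).mpr hsA)
    set σ : NNReal := ⟨(ρ + 1) / 2, by positivity⟩ with hσdef
    have hσcoe : (σ : ℝ) = (ρ + 1) / 2 := rfl
    have hσ0 : 0 < σ := by
      rw [← NNReal.coe_pos, hσcoe]; positivity
    have hσ1 : (σ : ℝ) < 1 := by rw [hσcoe]; linarith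
    have hρσ : ρ < (σ : ℝ) := by rw [hσcoe]; linarith
    have hball : closedBall (0:ℂ) (σ:ℝ) ⊆ ball (0:ℂ) 1 := closedBall_subset_ball hσ1
    have hdf : DifferentiableOn ℂ f (closedBall 0 (σ:ℝ)) := hf.differentiableOn.mono hball
    have hcoeff : ∀ n, (cauchyPowerSeries f 0 (σ:ℝ)).coeff n
        = iteratedDeriv n f 0 / n.factorial := cauchy_coeff_eq hσ0 hdf
    have hgoal_eq : ∀ n ∈ Finset.range K,
        ‖iteratedDeriv n f 0 / (n.factorial : ℂ)‖ * s ^ n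
        = ‖(cauchyPowerSeries f 0 (σ:ℝ)).coeff n‖ * s ^ n := by
      intro n _
      rw [hcoeff]
    rw [Finset.sum_congr rfl hgoal_eq]
    have hsδ : s * (B + A * δ) ≤ δ := by
      have hpossum : 0 < B + A * δ := by nlinarith
      calc s * (B + A * δ) ≤ (R₂ / (3 * R₂ - 2 * δ)) * (B + A * δ) :=
            mul_le_mul_of_nonneg_right hsr.le hpossum.le
        _ = δ := by rw [hBAδ]; field_simp [h3R.ne']; exact div_self (by linarith)
    refine partial_sum_bound (fun n => norm_nonneg _) ?_ hApos hBpos.le hδ hs0 hsA1 hρpos hρsq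
      hsδ (fun K' => coeff_sq_bound hf hφa hφ0 hφm hA0 hA1 hBpos.le hfeq hρpos hρ1 hσ0 hσ1 hρσ K') K
    rw [hcoeff]
    simp [iteratedDeriv_zero, h0]
  have hmain : ∀ K : ℕ,
      ∑ n ∈ Finset.range K, ‖iteratedDeriv n f 0 / n.factorial‖ * r ^ n ≤ δ := by
    intro K
    rcases eq_or_lt_of_le hr0 with heq | hpos
    · have hz : ∀ n ∈ Finset.range K, ‖iteratedDeriv n f 0 / n.factorial‖ * r ^ n = 0 := by
        intro n _
        cases n with
        | zero => simp [← heq, iteratedDeriv_zero, h0]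
        | succ m => rw [← heq, zero_pow (Nat.succ_ne_zero m), mul_zero]
      rw [Finset.sum_congr rfl hz, Finset.sum_const_zero]
      exact hδ.le
    · rcases lt_or_eq_of_le hrle with hlt | heqr
      · exact hstrict r hpos hlt K
      · rw [heqr]
        set SK : ℝ → ℝ := fun t => ∑ n ∈ Finset.range K, ‖iteratedDeriv n f 0 / n.factorial‖ * t ^ n
          with hSK
        have hcont : Continuous SK := by
          apply continuous_finset_sum
          exact fun n _ => continuous_const.mul (continuous_pow n)
        refine le_of_tendsto (x := 𝓝[<] (R₂ / (3 * R₂ - 2 * δ)))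
          (hcont.continuousWithinAt (s := Set.Iio (R₂ / (3 * R₂ - 2 * δ)))
            (x := R₂ / (3 * R₂ - 2 * δ))) ?_
        have hmem : Set.Ioo (0:ℝ) (R₂ / (3 * R₂ - 2 * δ)) ∈ 𝓝[<] (R₂ / (3 * R₂ - 2 * δ)) :=
          Ioo_mem_nhdsLT_of_mem ⟨hr₀pos, le_refl _⟩
        filter_upwards [hmem] with t ht
        exact hstrict t ht.1 ht.2 K
  have hd34 : DifferentiableOn ℂ f (closedBall 0 ((3/4 : NNReal) : ℝ)) := by
    refine (hf.differentiableOn).mono ?_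
    refine closedBall_subset_ball ?_
    norm_num
  have hps34 := hd34.hasFPowerSeriesOnBall (by norm_num : (0:NNReal) < 3/4)
  have hsum : Summable fun n => ‖iteratedDeriv n f 0 / n.factorial‖ * r ^ n := by
    have hrad : ((r.toNNReal : ℝ≥0∞)) < (cauchyPowerSeries f 0 ((3/4:NNReal):ℝ)).radius := by
      refine lt_of_lt_of_le ?_ hps34.r_le
      rw [ENNReal.coe_lt_coe]
      refine (Real.toNNReal_lt_iff_lt_coe hr0).mpr ?_
      push_cast
      linarith [hrle, hr₀half]
    have := (cauchyPowerSeries f 0 ((3/4:NNReal):ℝ)).summable_norm_mul_pow hrad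
    refine this.congr fun n => ?_
    rw [FormalMultilinearSeries.norm_apply_eq_norm_coef,
      cauchy_coeff_eq (by norm_num : (0:NNReal) < 3/4) hd34 n, Real.coe_toNNReal r hr0]
  exact Summable.tsum_le_of_sum_range_le hsum hmain
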